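/- Let h : ℝ^d → ℝ be three times continuously differentiable (class C³), let p ∈ ℝ^d and α ∈ [0,1] be fixed. Then the function v ↦ h(p) − (1−α)·h(p + α·v) − α·h(p − (1−α)·v) + (α(1−α)/2)·D²_v h(p) is O(‖v‖³) as v → 0 (in the sense of Asymptotics.IsBigO along the neighborhood filter of 0). -/

import Mathlib

open Metric Set Asymptotics

/-- Mean value step: if `φ 0 = 0` and `‖Dφ(v)‖ ≤ C‖v‖ⁿ` on a ball around `0`,
then `‖φ v‖ ≤ C‖v‖ⁿ⁺¹` on that ball. -/
lemma mvt_aux {E F : Type*} [NormedAddCommGroup E] [NormedSpace ℝ E]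
    [NormedAddCommGroup F] [NormedSpace ℝ F] {φ : E → F} {φ' : E → E →L[ℝ] F}
    {r C : ℝ} {n : ℕ} (h0 : φ 0 = 0) (hC : 0 ≤ C)
    (hd : ∀ v ∈ ball (0:E) r, HasFDerivAt φ (φ' v) v)
    (hb : ∀ v ∈ ball (0:E) r, ‖φ' v‖ ≤ C * ‖v‖ ^ n) :
    ∀ v ∈ ball (0:E) r, ‖φ v‖ ≤ C * ‖v‖ ^ (n + 1) := by
  intro v hv
  have hr : (0:ℝ) < r := lt_of_le_of_lt dist_nonneg hv
  have h0m : (0:E) ∈ ball (0:E) r := mem_ball_self hr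
  have hseg : segment ℝ (0:E) v ⊆ ball (0:E) r :=
    (convex_ball (0:E) r).segment_subset h0m hv
  have hnorm : ∀ x ∈ segment ℝ (0:E) v, ‖x‖ ≤ ‖v‖ := by
    intro x hx
    rw [segment_eq_image'] at hx
    obtain ⟨θ, hθ, rfl⟩ := hx
    simp only [zero_add, sub_zero, norm_smul, Real.norm_eq_abs, abs_of_nonneg hθ.1]
    nlinarith [norm_nonneg v, hθ.2]
  have key := (convex_segment (0:E) v).norm_image_sub_le_of_norm_hasFDerivWithin_le
    (f := φ) (f' := φ') (C := C * ‖v‖ ^ n)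
    (fun x hx => (hd x (hseg hx)).hasFDerivWithinAt)
    (fun x hx => le_trans (hb x (hseg hx)) (by gcongr; exact hnorm x hx))
    (left_mem_segment ℝ 0 v) (right_mem_segment ℝ 0 v)
  simpa [h0, pow_succ, mul_assoc] using key

set_option maxHeartbeats 1000000 in
/-- Asymptotic form of Proposition 1: for a `C³` function `h : ℝ^d → ℝ`, fixed `p` and
`α ∈ [0,1]`, the quantity
`h(p) - (1-α)h(p+αv) - αh(p-(1-α)v) + (α(1-α)/2)·D²_v h(p)` is `O(‖v‖³)` as `v → 0`. -/
theorem stmt2 (d : ℕ) (h : EuclideanSpace ℝ (Fin d) → ℝ) (hh : ContDiff ℝ 3 h)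
    (p : EuclideanSpace ℝ (Fin d)) (α : ℝ) (hα : α ∈ Set.Icc (0 : ℝ) 1) :
    Asymptotics.IsBigO (nhds (0 : EuclideanSpace ℝ (Fin d)))
      (fun v : EuclideanSpace ℝ (Fin d) =>
        h p - (1 - α) * h (p + α • v) - α * h (p - (1 - α) • v)
          + (α * (1 - α) / 2) * iteratedFDeriv ℝ 2 h p ![v, v])
      (fun v => ‖v‖ ^ 3) := by
  obtain ⟨hα0, hα1⟩ := hα
  have hd1 : Differentiable ℝ h := hh.differentiable (by norm_num)
  have hc2 : ContDiff ℝ 2 (fderiv ℝ h) := hh.fderiv_right (by norm_num)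
  have hd2 : Differentiable ℝ (fderiv ℝ h) := hc2.differentiable (by norm_num)
  have hc1 : ContDiff ℝ 1 (fderiv ℝ (fderiv ℝ h)) := hc2.fderiv_right (by norm_num)
  have hsymm : ∀ w u : EuclideanSpace ℝ (Fin d),
      fderiv ℝ (fderiv ℝ h) p w u = fderiv ℝ (fderiv ℝ h) p u w := fun w u =>
    (hh.contDiffAt.isSymmSndFDerivAt (by norm_num)).eq w u
  obtain ⟨K, t, ht, hK⟩ := hc1.contDiffAt.exists_lipschitzOnWith (x := p)
  obtain ⟨r, hr, hball⟩ := Metric.mem_nhds_iff.1 ht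
  -- Lipschitz bound on the second derivative
  have hb2 : ∀ v ∈ ball (0 : EuclideanSpace ℝ (Fin d)) r,
      ‖fderiv ℝ (fderiv ℝ h) (p + v) - fderiv ℝ (fderiv ℝ h) p‖ ≤ (K : ℝ) * ‖v‖ ^ 1 := by
    intro v hv
    have h1 : p + v ∈ t := hball (by simpa [mem_ball, dist_eq_norm] using mem_ball_zero_iff.1 hv)
    have h2 : p ∈ t := hball (mem_ball_self hr)
    have := hK.dist_le_mul _ h1 _ h2
    rw [dist_eq_norm, dist_eq_norm] at this
    simpa using this
  -- first-order remainder bound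
  have hb1 : ∀ v ∈ ball (0 : EuclideanSpace ℝ (Fin d)) r,
      ‖fderiv ℝ h (p + v) - fderiv ℝ h p - fderiv ℝ (fderiv ℝ h) p v‖ ≤ (K : ℝ) * ‖v‖ ^ 2 := by
    refine mvt_aux (by simp) K.coe_nonneg (fun v hv => ?_) hb2
    have A : HasFDerivAt (fun v : EuclideanSpace ℝ (Fin d) => fderiv ℝ h (p + v))
        (fderiv ℝ (fderiv ℝ h) (p + v)) v := by
      have := ((hd2 (p + v)).hasFDerivAt).comp v ((hasFDerivAt_id v).const_add p)
      simp at this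
      exact this
    exact (A.sub_const _).sub (fderiv ℝ (fderiv ℝ h) p).hasFDerivAt
  -- second-order remainder bound
  have hb0 : ∀ v ∈ ball (0 : EuclideanSpace ℝ (Fin d)) r,
      ‖h (p + v) - h p - fderiv ℝ h p v - fderiv ℝ (fderiv ℝ h) p v v * (2⁻¹ : ℝ)‖
        ≤ (K : ℝ) * ‖v‖ ^ 3 := by
    refine mvt_aux (by simp) K.coe_nonneg (fun v hv => ?_) hb1
    have A : HasFDerivAt (fun v : EuclideanSpace ℝ (Fin d) => h (p + v))
        (fderiv ℝ h (p + v)) v := by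
      have := ((hd1 (p + v)).hasFDerivAt).comp v ((hasFDerivAt_id v).const_add p)
      simp at this
      exact this
    have Q : HasFDerivAt (fun v : EuclideanSpace ℝ (Fin d) => fderiv ℝ (fderiv ℝ h) p v v)
        (fderiv ℝ (fderiv ℝ h) p v + (fderiv ℝ (fderiv ℝ h) p).flip v) v := by
      have := HasFDerivAt.clm_apply (c := fun v : EuclideanSpace ℝ (Fin d) =>
          fderiv ℝ (fderiv ℝ h) p v) (c' := fderiv ℝ (fderiv ℝ h) p)
        (fderiv ℝ (fderiv ℝ h) p).hasFDerivAt (hasFDerivAt_id v)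
      simpa using this
    have := ((A.sub_const (h p)).sub (fderiv ℝ h p).hasFDerivAt).sub (Q.mul_const (2⁻¹ : ℝ))
    convert this using 1
    · rfl
    ext w
    simp only [ContinuousLinearMap.coe_sub', Pi.sub_apply, ContinuousLinearMap.add_apply,
      ContinuousLinearMap.coe_smul', Pi.smul_apply, ContinuousLinearMap.flip_apply,
      smul_eq_mul]
    rw [hsymm w v]
    ring
  -- assemble
  rw [Asymptotics.isBigO_iff]
  refine ⟨K, ?_⟩
  filter_upwards [Metric.ball_mem_nhds (0 : EuclideanSpace ℝ (Fin d)) hr] with v hv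
  have hvr : ‖v‖ < r := mem_ball_zero_iff.1 hv
  have hαv : α • v ∈ ball (0 : EuclideanSpace ℝ (Fin d)) r := by
    rw [mem_ball_zero_iff, norm_smul, Real.norm_eq_abs, abs_of_nonneg hα0]
    nlinarith [norm_nonneg v]
  have hβv : -((1 - α) • v) ∈ ball (0 : EuclideanSpace ℝ (Fin d)) r := by
    rw [mem_ball_zero_iff, norm_neg, norm_smul, Real.norm_eq_abs, abs_of_nonneg (by linarith)]
    nlinarith [norm_nonneg v]
  have e1 := hb0 _ hαv
  have e2 := hb0 _ hβv
  have hαvn : ‖α • v‖ ≤ ‖v‖ := by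
    rw [norm_smul, Real.norm_eq_abs, abs_of_nonneg hα0]
    nlinarith [norm_nonneg v]
  have hβvn : ‖-((1 - α) • v)‖ ≤ ‖v‖ := by
    rw [norm_neg, norm_smul, Real.norm_eq_abs, abs_of_nonneg (by linarith : (0:ℝ) ≤ 1 - α)]
    nlinarith [norm_nonneg v]
  have e1' : ‖h (p + α • v) - h p - fderiv ℝ h p (α • v)
      - fderiv ℝ (fderiv ℝ h) p (α • v) (α • v) * (2⁻¹ : ℝ)‖ ≤ (K : ℝ) * ‖v‖ ^ 3 :=
    e1.trans (by gcongr)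
  have e2' : ‖h (p + -((1 - α) • v)) - h p - fderiv ℝ h p (-((1 - α) • v))
      - fderiv ℝ (fderiv ℝ h) p (-((1 - α) • v)) (-((1 - α) • v)) * (2⁻¹ : ℝ)‖
      ≤ (K : ℝ) * ‖v‖ ^ 3 :=
    e2.trans (by gcongr)
  -- algebraic identity
  have key : h p - (1 - α) * h (p + α • v) - α * h (p - (1 - α) • v)
      + (α * (1 - α) / 2) * iteratedFDeriv ℝ 2 h p ![v, v]
      = -((1 - α) * (h (p + α • v) - h p - fderiv ℝ h p (α • v)
          - fderiv ℝ (fderiv ℝ h) p (α • v) (α • v) * (2⁻¹ : ℝ)))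
        - α * (h (p + -((1 - α) • v)) - h p - fderiv ℝ h p (-((1 - α) • v))
          - fderiv ℝ (fderiv ℝ h) p (-((1 - α) • v)) (-((1 - α) • v)) * (2⁻¹ : ℝ)) := by
    rw [iteratedFDeriv_two_apply]
    simp only [Matrix.cons_val_zero, Matrix.cons_val_one, Matrix.head_cons, map_smul, map_neg,
      smul_eq_mul, ContinuousLinearMap.neg_apply, ContinuousLinearMap.coe_smul', Pi.smul_apply,
      ← sub_eq_add_neg]
    ring
  rw [key, Real.norm_eq_abs (‖v‖ ^ 3), abs_of_nonneg (by positivity)]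
  set X := h (p + α • v) - h p - fderiv ℝ h p (α • v)
    - fderiv ℝ (fderiv ℝ h) p (α • v) (α • v) * (2⁻¹ : ℝ) with hX
  set Y := h (p + -((1 - α) • v)) - h p - fderiv ℝ h p (-((1 - α) • v))
    - fderiv ℝ (fderiv ℝ h) p (-((1 - α) • v)) (-((1 - α) • v)) * (2⁻¹ : ℝ) with hY
  have tri : ‖-((1 - α) * X) - α * Y‖ ≤ (1 - α) * ‖X‖ + α * ‖Y‖ := by
    refine (norm_sub_le _ _).trans ?_
    rw [norm_neg, norm_mul, norm_mul, Real.norm_eq_abs (1 - α), Real.norm_eq_abs α,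
      abs_of_nonneg (by linarith), abs_of_nonneg hα0]
  refine tri.trans ?_
  nlinarith [norm_nonneg X, norm_nonneg Y, e1', e2', K.coe_nonneg,
    pow_nonneg (norm_nonneg v) 3]
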